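/- Let F be a field with q elements and k ≥ 3. Let G be the k-uniform hypergraph whose vertices are the normalized nonzero vectors of F^k (vectors whose leading nonzero entry equals 1), and whose edges are the k-sets of vertices whose vectors are linearly independent. Then G has (q^k−1)/(q−1) vertices, every two vertices lie in a common edge, and hence χ(G) = (q^k−1)/(q−1). -/

import Mathlib

/-- A vector in F^k is normalized if its leading nonzero entry equals 1. -/
def Normalized {k : ℕ} {F : Type} [Field F] (x : Fin k → F) : Prop :=
  ∃ i : Fin k, x i = 1 ∧ ∀ j : Fin k, j < i → x j = 0

lemma norm_unique {k : ℕ} {F : Type} [Field F] {x y : Fin k → F}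
    (hx : Normalized x) (hy : Normalized y) {c : F} (h : c • y = x) : x = y := by
  obtain ⟨i, hyi, hyj⟩ := hy
  obtain ⟨i', hxi, hxj⟩ := hx
  have hc : c ≠ 0 := by
    rintro rfl
    have := congrFun h i'
    simp [hxi] at this
  have hii : i' = i := by
    rcases lt_trichotomy i' i with hlt | he | hgt
    · have := congrFun h i'
      simp only [Pi.smul_apply, smul_eq_mul, hyj i' hlt, hxi, mul_zero] at this
      exact absurd this.symm one_ne_zero
    · exact he
    · have := congrFun h i
      simp only [Pi.smul_apply, smul_eq_mul, hxj i hgt, hyi, mul_one] at this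
      exact absurd this hc
  have hc1 : c = 1 := by
    have := congrFun h i
    simp only [Pi.smul_apply, smul_eq_mul, hyi, mul_one, hii ▸ hxi] at this
    exact this
  rw [← h, hc1, one_smul]

lemma exists_normalized_smul {k : ℕ} {F : Type} [Field F] {x : Fin k → F}
    (hx : x ≠ 0) : ∃ c : F, c ≠ 0 ∧ Normalized (c • x) := by
  classical
  have hne : (Finset.univ.filter fun i => x i ≠ 0).Nonempty := by
    by_contra h
    apply hx
    funext i
    simp only [Pi.zero_apply]
    by_contra hxi
    exact h ⟨i, by simp [hxi]⟩
  set i := (Finset.univ.filter fun i => x i ≠ 0).min' hne with hi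
  have hmem := (Finset.univ.filter fun i => x i ≠ 0).min'_mem hne
  rw [Finset.mem_filter] at hmem
  refine ⟨(x i)⁻¹, inv_ne_zero hmem.2, i, by rw [Pi.smul_apply, smul_eq_mul]; exact inv_mul_cancel₀ hmem.2, fun j hj => ?_⟩
  have : x j = 0 := by
    by_contra hxj
    exact absurd (Finset.min'_le _ j (by simp [hxj])) (not_le.mpr hj)
  simp [this]

lemma card_normalized (F : Type) [Field F] [Fintype F] (k : ℕ) :
    Nat.card {x : Fin k → F // Normalized x}
      = ∑ i ∈ Finset.range k, Fintype.card F ^ i := by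
  classical
  rw [Nat.card_eq_fintype_card, Fintype.card_subtype]
  have hsplit : (Finset.univ.filter fun x : Fin k → F => Normalized x)
      = Finset.univ.biUnion (fun i : Fin k =>
          Finset.univ.filter fun x : Fin k → F => x i = 1 ∧ ∀ j, j < i → x j = 0) := by
    ext x
    simp only [Finset.mem_filter, Finset.mem_biUnion, Finset.mem_univ, true_and]; exact Iff.rfl
  rw [hsplit, Finset.card_biUnion]
  · have hcard : ∀ i : Fin k,
        (Finset.univ.filter fun x : Fin k → F => x i = 1 ∧ ∀ j, j < i → x j = 0).card
          = Fintype.card F ^ (k - 1 - (i : ℕ)) := by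
      intro i
      rw [← Fintype.card_subtype]
      have e : {x : Fin k → F // x i = 1 ∧ ∀ j, j < i → x j = 0}
          ≃ ({j : Fin k // i < j} → F) :=
        { toFun := fun x j => x.1 j.1
          invFun := fun f => ⟨fun j => if h : i < j then f ⟨j, h⟩
              else if h2 : j = i then 1 else 0, by simp, fun j hj => by
                simp [not_lt_of_gt hj, ne_of_lt hj]⟩
          left_inv := by
            rintro ⟨x, hx1, hx2⟩
            ext j
            by_cases h : i < j
            · simp [h]
            · by_cases h2 : j = i
              · subst h2; simp [hx1]
              · simp [h, h2, hx2 j (lt_of_le_of_ne (le_of_not_gt h) h2)]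
          right_inv := by
            intro f
            funext j
            simp [j.2] }
      rw [Fintype.card_congr e, Fintype.card_fun, Fintype.card_subtype]
      congr 1
      rw [Finset.filter_lt_eq_Ioi, Fin.card_Ioi]
    simp only [hcard]
    rw [Fin.sum_univ_eq_sum_range (fun i => Fintype.card F ^ (k - 1 - i)) k]
    exact Finset.sum_range_reflect (fun i => Fintype.card F ^ i) k
  · intro a _ b _ hab
    rw [Function.onFun, Finset.disjoint_left]
    rintro x hx hx'
    simp only [Finset.mem_filter] at hx hx'
    rcases lt_or_gt_of_ne hab with h | h
    · have := hx'.2.2 a h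
      rw [hx.2.1] at this
      exact one_ne_zero this
    · have := hx.2.2 b h
      rw [hx'.2.1] at this
      exact one_ne_zero this

lemma norm_ne_zero {k : ℕ} {F : Type} [Field F] {x : Fin k → F}
    (hx : Normalized x) : x ≠ 0 := by
  obtain ⟨i, hi, -⟩ := hx
  intro h
  rw [h] at hi
  exact one_ne_zero hi.symm

lemma common_edge {k : ℕ} {F : Type} [Field F] [Fintype F]
    (u v : {x : Fin k → F // Normalized x}) (huv : u ≠ v) :
    ∃ s : Finset {x : Fin k → F // Normalized x}, s.card = k ∧
      LinearIndependent F (fun x : s => (x.val.val : Fin k → F)) ∧ u ∈ s ∧ v ∈ s := by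
  classical
  have hvne : v.1 ≠ 0 := norm_ne_zero v.2
  have hpair : LinearIndependent F ![u.1, v.1] := by
    rw [linearIndependent_fin2]
    refine ⟨by simpa using hvne, fun a ha => ?_⟩
    simp only [Matrix.cons_val_one, Matrix.head_cons, Matrix.cons_val_zero] at ha
    exact huv (Subtype.ext (norm_unique u.2 v.2 ha).symm ▸ rfl)
  have hset : LinearIndependent F ((↑) : ({u.1, v.1} : Set (Fin k → F)) → (Fin k → F)) := by
    have := hpair.linearIndepOn_id
    have hr : Set.range ![u.1, v.1] = ({u.1, v.1} : Set (Fin k → F)) := by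
      ext x
      simp [Set.range, Fin.exists_fin_two, eq_comm]
    rwa [hr] at this
  obtain ⟨b, hbt, hsb, htb, hli⟩ : ∃ b ⊆ Set.univ, {u.1, v.1} ⊆ b ∧ Set.univ ⊆ (Submodule.span F b : Set (Fin k → F)) ∧
      LinearIndependent F ((↑) : b → (Fin k → F)) := exists_linearIndepOn_id_extension hset (Set.subset_univ _)
  have hfin : b.Finite := Set.toFinite b
  haveI : Fintype b := hfin.fintype
  have hcardb : Fintype.card b = k := by
    have hspan : ⊤ ≤ Submodule.span F (Set.range ((↑) : b → (Fin k → F))) := by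
      rw [Subtype.range_coe]
      exact fun x _ => htb (Set.mem_univ x)
    let B : Module.Basis b F (Fin k → F) := Module.Basis.mk hli hspan
    rw [← Module.finrank_eq_card_basis B, Module.finrank_fin_fun]
  have hx0 : ∀ x : b, x.1 ≠ 0 := fun x => hli.ne_zero x
  choose w hw0 hwn using fun x : b => exists_normalized_smul (hx0 x)
  set g : b → (Fin k → F) := fun x => w x • x.1 with hgdef
  have hg : LinearIndependent F g := by
    have := hli.units_smul (fun x => Units.mk0 (w x) (hw0 x))
    exact this
  set φ : b → {x : Fin k → F // Normalized x} := fun x => ⟨g x, hwn x⟩ with hφdef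
  have hφinj : Function.Injective φ := fun x y h =>
    hg.injective (congrArg Subtype.val h)
  set s : Finset {x : Fin k → F // Normalized x} := Finset.univ.image φ with hsdef
  have key : ∀ x : s, ∃ y : b, φ y = x.1 := by
    rintro ⟨x, hx⟩
    obtain ⟨y, -, hy⟩ := Finset.mem_image.mp hx
    exact ⟨y, hy⟩
  choose ψ hψ using key
  refine ⟨s, ?_, ?_, ?_, ?_⟩
  · rw [hsdef, Finset.card_image_of_injective _ hφinj, Finset.card_univ, hcardb]
  · have hψinj : Function.Injective ψ := by
      intro a b h
      apply Subtype.ext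
      rw [← hψ a, ← hψ b, h]
    have heq : (fun x : s => (x.val.val : Fin k → F)) = g ∘ ψ := by
      funext x
      rw [Function.comp_apply]
      exact (congrArg Subtype.val (hψ x)).symm
    rw [heq]
    exact hg.comp ψ hψinj
  · have hub : u.1 ∈ b := hsb (Set.mem_insert _ _)
    refine Finset.mem_image.mpr ⟨⟨u.1, hub⟩, Finset.mem_univ _, ?_⟩
    exact Subtype.ext (norm_unique (hwn ⟨u.1, hub⟩) u.2 rfl)
  · have hvb : v.1 ∈ b := hsb (Set.mem_insert_of_mem _ rfl)
    refine Finset.mem_image.mpr ⟨⟨v.1, hvb⟩, Finset.mem_univ _, ?_⟩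
    exact Subtype.ext (norm_unique (hwn ⟨v.1, hvb⟩) v.2 rfl)

/-- For a field F with q elements and k ≥ 3, the k-uniform hypergraph G on the
normalized vectors of F^k, whose edges are the linearly independent k-sets of vertices, has
(q^k-1)/(q-1) vertices, every two of its vertices lie in a common edge, and its strong
chromatic number equals (q^k-1)/(q-1). -/
theorem stmt5 (F : Type) [Field F] [Fintype F] (q k : ℕ)
    (hF : Fintype.card F = q) (hk : 3 ≤ k) :
    Nat.card {x : Fin k → F // Normalized x} = (q ^ k - 1) / (q - 1) ∧
    (∀ u v : {x : Fin k → F // Normalized x}, u ≠ v →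
      ∃ s : Finset {x : Fin k → F // Normalized x}, s.card = k ∧
        LinearIndependent F (fun x : s => (x.val.val : Fin k → F)) ∧ u ∈ s ∧ v ∈ s) ∧
    sInf {c : ℕ | ∃ g : {x : Fin k → F // Normalized x} → Fin c,
        ∀ s : Finset {x : Fin k → F // Normalized x}, s.card = k →
          LinearIndependent F (fun x : s => (x.val.val : Fin k → F)) →
            Set.InjOn g ↑s} = (q ^ k - 1) / (q - 1) := by
  classical
  have hq : 2 ≤ q := hF ▸ Fintype.one_lt_card
  have hcard : Nat.card {x : Fin k → F // Normalized x} = (q ^ k - 1) / (q - 1) := by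
    rw [card_normalized, hF, Nat.geomSum_eq hq]
  refine ⟨hcard, fun u v huv => common_edge u v huv, ?_⟩
  haveI : Fintype {x : Fin k → F // Normalized x} := Fintype.ofFinite _
  have hNV : Fintype.card {x : Fin k → F // Normalized x} = (q ^ k - 1) / (q - 1) := by
    rw [← Nat.card_eq_fintype_card]; exact hcard
  have hmem : (q ^ k - 1) / (q - 1) ∈ {c : ℕ | ∃ g : {x : Fin k → F // Normalized x} → Fin c,
      ∀ s : Finset {x : Fin k → F // Normalized x}, s.card = k →
        LinearIndependent F (fun x : s => (x.val.val : Fin k → F)) →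
          Set.InjOn g ↑s} := by
    refine ⟨Fintype.equivFinOfCardEq hNV, fun s _ _ => ?_⟩
    exact fun a _ b _ h => (Fintype.equivFinOfCardEq hNV).injective h
  have hlb : ∀ c ∈ {c : ℕ | ∃ g : {x : Fin k → F // Normalized x} → Fin c,
      ∀ s : Finset {x : Fin k → F // Normalized x}, s.card = k →
        LinearIndependent F (fun x : s => (x.val.val : Fin k → F)) →
          Set.InjOn g ↑s}, (q ^ k - 1) / (q - 1) ≤ c := by
    rintro c ⟨g, hg⟩
    have hginj : Function.Injective g := by
      intro a b hab
      by_contra hne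
      obtain ⟨s, hsc, hsl, has, hbs⟩ := common_edge a b hne
      exact hne (hg s hsc hsl (Finset.mem_coe.mpr has) (Finset.mem_coe.mpr hbs) hab)
    calc (q ^ k - 1) / (q - 1) = Fintype.card {x : Fin k → F // Normalized x} := hNV.symm
      _ ≤ Fintype.card (Fin c) := Fintype.card_le_of_injective g hginj
      _ = c := Fintype.card_fin c
  exact le_antisymm (Nat.sInf_le hmem) (le_csInf ⟨_, hmem⟩ hlb)
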